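/- Let v₁ = (0,0,0), v₂ = (1000,0,0), v₃ = (198,597,0), v₄ = (404,−380,51), v₅ = (490,249,823), v₆ = (102,−666,715), v₇ = (429,−118,−55), v₈ = (266,847,147), v₉ = (869,136,−214), v₁₀ = (681,−260,685) in ℝ³, and define edge vectors eᵢ = v_{i+1} − vᵢ for i = 1, …, 9 and e₁₀ = v₁ − v₁₀. Then there is no w ∈ ℝ³ such that (−1)^{i+1} (w · eᵢ) > 0 for every i ∈ {1, …, 10}. -/

import Mathlib

/-- The vertices of the paper's 10-stick polygonal realization of the knot `8_13`.
Here `vert8_13 i` is the paper's vertex `v_(i+1)`. -/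
noncomputable def vert8_13 : Fin 10 → (Fin 3 → ℝ) :=
  ![![0, 0, 0], ![1000, 0, 0], ![198, 597, 0], ![404, -380, 51], ![490, 249, 823], ![102, -666, 715], ![429, -118, -55], ![266, 847, 147], ![869, 136, -214], ![681, -260, 685]]

/-- The edge vectors `eᵢ = v_(i+1) − vᵢ` (cyclically, so `e₁₀ = v₁ − v₁₀`);
here `edge8_13 i` is the paper's `e_(i+1)`, using wrap-around addition on `Fin 10`. -/
noncomputable def edge8_13 (i : Fin 10) : Fin 3 → ℝ :=
  vert8_13 (i + 1) - vert8_13 i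

/-- There is no `w ∈ ℝ³` such that `(−1)^(i+1) (w · eᵢ) > 0` for every
`i ∈ {1, …, 10}`: no projection of this polygon (the knot `8_13`) to a line has
5 local maxima. (With 0-based indexing `i : Fin 10`, the sign is `(−1)^i`.) -/
theorem no_alternating_direction_8_13 :
    ¬ ∃ w : Fin 3 → ℝ, ∀ i : Fin 10,
        0 < (-1 : ℝ) ^ (i : ℕ) * ∑ j : Fin 3, w j * edge8_13 i j := by
  rintro ⟨w, h⟩
  have h0 := h 0
  have h1 := h 1
  have h3 := h 3
  have h7 := h 7
  have e0 : edge8_13 0 = ![1000, 0, 0] - ![0, 0, 0] := rfl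
  have e1 : edge8_13 1 = ![198, 597, 0] - ![1000, 0, 0] := rfl
  have e3 : edge8_13 3 = ![490, 249, 823] - ![404, -380, 51] := rfl
  have e7 : edge8_13 7 = ![869, 136, -214] - ![266, 847, 147] := rfl
  rw [e0] at h0
  rw [e1] at h1
  rw [e3] at h3
  rw [e7] at h7
  norm_num [Fin.sum_univ_three, Matrix.cons_val_two, Matrix.tail_cons, Matrix.head_cons, show ((3 : Fin 10) : ℕ) = 3 from rfl, show ((7 : Fin 10) : ℕ) = 7 from rfl] at h0 h1 h3 h7
  linarith
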